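/- Let 𝕍 = {(x,0,0)} and 𝕎 = {(0,y,t)} in the Heisenberg group ℍ, and let φ = (φ₁, φ₂) : E → 𝕎 (E ⊆ 𝕍 ≅ ℝ, 𝕎 ≅ ℝ²) be an intrinsic L-Lipschitz function, i.e. its graph map Φ(v) = (v, φ₁(v), φ₂(v) + φ₁(v)v/2) satisfies ‖π_𝕎(Φ(v₁)⁻¹·Φ(v₂))‖ ≤ L‖π_𝕍(Φ(v₁)⁻¹·Φ(v₂))‖ for all v₁, v₂ ∈ E. Then the map (φ₁, −φ₂) : E → ℝ² is 2L²-tame. -/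
import Mathlib


/-- Heisenberg group product on `ℝ³`. -/
noncomputable def Hmul (p q : ℝ × ℝ × ℝ) : ℝ × ℝ × ℝ :=
  (p.1 + q.1, p.2.1 + q.2.1, p.2.2 + q.2.2 + (p.1 * q.2.1 - q.1 * p.2.1) / 2)

/-- Heisenberg group inverse. -/
def Hinv (p : ℝ × ℝ × ℝ) : ℝ × ℝ × ℝ := (-p.1, -p.2.1, -p.2.2)

/-- The max-norm `‖(x,y,t)‖ = max (√(x²+y²)) (√|t|)`. -/
noncomputable def Hnorm (p : ℝ × ℝ × ℝ) : ℝ :=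
  max (Real.sqrt (p.1 ^ 2 + p.2.1 ^ 2)) (Real.sqrt |p.2.2|)

/-- Horizontal projection onto `𝕍 = {(x,0,0)}`. -/
def piV (p : ℝ × ℝ × ℝ) : ℝ × ℝ × ℝ := (p.1, 0, 0)

/-- Vertical projection onto `𝕎 = {(0,y,t)}`. -/
noncomputable def piW (p : ℝ × ℝ × ℝ) : ℝ × ℝ × ℝ := (0, p.2.1, p.2.2 - p.1 * p.2.1 / 2)

/-- The graph map of `φ = (φ₁, φ₂) : 𝕍 → 𝕎`. -/
noncomputable def graphMap (φ₁ φ₂ : ℝ → ℝ) (v : ℝ) : ℝ × ℝ × ℝ :=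
  (v, φ₁ v, φ₂ v + φ₁ v * v / 2)

/-- If `φ = (φ₁, φ₂) : E → 𝕎` is intrinsic `L`-Lipschitz over the horizontal
subgroup `𝕍`, then `(φ₁, −φ₂)` is a `2L²`-tame map. -/
theorem stmt11 (E : Set ℝ) (φ₁ φ₂ : ℝ → ℝ) (L : ℝ)
    (hgraph : ∀ v₁ ∈ E, ∀ v₂ ∈ E,
      Hnorm (piW (Hmul (Hinv (graphMap φ₁ φ₂ v₁)) (graphMap φ₁ φ₂ v₂))) ≤
        L * Hnorm (piV (Hmul (Hinv (graphMap φ₁ φ₂ v₁)) (graphMap φ₁ φ₂ v₂)))) :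
    ∀ x ∈ E, ∀ y ∈ E, x ≠ y →
      |((-φ₂ x) - (-φ₂ y)) / (x - y) - φ₁ x| + |((-φ₂ x) - (-φ₂ y)) / (x - y) - φ₁ y| ≤
        2 * L ^ 2 * |x - y| := by
  have key : ∀ v₁ ∈ E, ∀ v₂ ∈ E,
      |φ₂ v₂ - φ₂ v₁ + (v₂ - v₁) * φ₁ v₁| ≤ L ^ 2 * (v₂ - v₁) ^ 2 := by
    intro v₁ h₁ v₂ h₂
    have h := hgraph v₁ h₁ v₂ h₂
    simp only [Hmul, Hinv, graphMap, piW, piV, Hnorm] at h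
    have hT : Real.sqrt |φ₂ v₂ - φ₂ v₁ + (v₂ - v₁) * φ₁ v₁| ≤
        L * Real.sqrt ((v₂ - v₁) ^ 2) := by
      have h2 := le_trans (le_max_right _ _) h
      have e1 : -(φ₂ v₁ + φ₁ v₁ * v₁ / 2) + (φ₂ v₂ + φ₁ v₂ * v₂ / 2) +
          (-v₁ * φ₁ v₂ - v₂ * -φ₁ v₁) / 2 - (-v₁ + v₂) * (-φ₁ v₁ + φ₁ v₂) / 2
          = φ₂ v₂ - φ₂ v₁ + (v₂ - v₁) * φ₁ v₁ := by ring
      have e2 : (-v₁ + v₂) ^ 2 + (0:ℝ) ^ 2 = (v₂ - v₁) ^ 2 := by ring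
      have e3 : Real.sqrt |(0:ℝ)| = 0 := by simp
      rw [e1, e2, e3] at h2
      simpa using h2
    have hL : 0 ≤ L * Real.sqrt ((v₂ - v₁) ^ 2) :=
      le_trans (Real.sqrt_nonneg _) hT
    have := mul_self_le_mul_self (Real.sqrt_nonneg _) hT
    rw [Real.mul_self_sqrt (abs_nonneg _)] at this
    calc |φ₂ v₂ - φ₂ v₁ + (v₂ - v₁) * φ₁ v₁|
        ≤ (L * Real.sqrt ((v₂ - v₁) ^ 2)) * (L * Real.sqrt ((v₂ - v₁) ^ 2)) := this
      _ = L ^ 2 * (v₂ - v₁) ^ 2 := by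
          rw [show (L * Real.sqrt ((v₂ - v₁) ^ 2)) * (L * Real.sqrt ((v₂ - v₁) ^ 2))
              = L ^ 2 * (Real.sqrt ((v₂ - v₁) ^ 2) * Real.sqrt ((v₂ - v₁) ^ 2)) by ring,
            Real.mul_self_sqrt (sq_nonneg _)]
  intro x hx y hy hxy
  have hne : x - y ≠ 0 := sub_ne_zero.mpr hxy
  have habs : 0 < |x - y| := abs_pos.mpr hne
  have k1 := key x hx y hy
  have k2 := key y hy x hx
  have t1 : |((-φ₂ x) - (-φ₂ y)) / (x - y) - φ₁ x| ≤ L ^ 2 * |x - y| := by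
    have e : ((-φ₂ x) - (-φ₂ y)) / (x - y) - φ₁ x
        = (φ₂ y - φ₂ x + (y - x) * φ₁ x) / (x - y) := by
      field_simp; ring
    rw [e, abs_div, div_le_iff₀ habs]
    calc |φ₂ y - φ₂ x + (y - x) * φ₁ x| ≤ L ^ 2 * (y - x) ^ 2 := k1
      _ = L ^ 2 * |x - y| * |x - y| := by
          rw [mul_assoc, abs_mul_abs_self]; ring
  have t2 : |((-φ₂ x) - (-φ₂ y)) / (x - y) - φ₁ y| ≤ L ^ 2 * |x - y| := by
    have e : ((-φ₂ x) - (-φ₂ y)) / (x - y) - φ₁ y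
        = -((φ₂ x - φ₂ y + (x - y) * φ₁ y) / (x - y)) := by
      field_simp; ring
    rw [e, abs_neg, abs_div, div_le_iff₀ habs]
    calc |φ₂ x - φ₂ y + (x - y) * φ₁ y| ≤ L ^ 2 * (x - y) ^ 2 := k2
      _ = L ^ 2 * |x - y| * |x - y| := by
          rw [mul_assoc, abs_mul_abs_self]; ring
  linarith
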